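/- arXiv:2211.05632 — 3 statements merged into one kernel-verified Lean document; each statement's English description precedes it below -/
import Mathlib

section
/- (Probabilistic core of Theorem 1.) Let (Ω, 𝔉, P) carry a filtration (𝔉_t)_{t=0}^T, let θ⋆ ∈ Θ, and for each t ∈ {1, …, T} let α_t, β_t : Ω → ℝ^d be 𝔉_t-measurable with ‖α_t‖₂ ≤ 1 and ‖β_t‖₂ ≤ 1 almost surely, and let θ_t be a Θ-valued 𝔉_{t−1}-measurable random element, such that almost surely E[⟨α_t, θ⋆⟩ | 𝔉_{t−1}] = ⟨g(θ_t), θ⋆⟩ and E[⟨β_t, θ⋆⟩ | 𝔉_{t−1}] = ⟨g(θ⋆), θ⋆⟩. Then for every δ ∈ (0,1), with probability at least 1 − δ, | Σ_{t=1}^T ⟨β_t − α_t, θ⋆⟩ − Σ_{t=1}^T ⟨g(θ⋆) − g(θ_t), θ⋆⟩ | ≤ 2√(8 T log(4/δ)). (In the paper, α_t is the action played by the contextual algorithm, β_t is the optimal contextual action, the first sum is the regret of the contextual algorithm, and the second sum is the regret of the simulated linear bandit algorithm.) -/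
open MeasureTheory Real
open scoped RealInnerProductSpace

lemma exp_le_linear (l c x : ℝ) (hc : 0 < c) (hx : |x| ≤ c) :
    Real.exp (l * x) ≤ Real.cosh (l * c) + (Real.sinh (l * c) / c) * x := by
  obtain ⟨hx1, hx2⟩ := abs_le.1 hx
  have ha : (0:ℝ) ≤ (c - x) / (2 * c) := div_nonneg (by linarith) (by linarith)
  have hb : (0:ℝ) ≤ (c + x) / (2 * c) := div_nonneg (by linarith) (by linarith)
  have hab : (c - x) / (2 * c) + (c + x) / (2 * c) = 1 := by field_simp; ring
  have h := convexOn_exp.2 (Set.mem_univ (-(l * c))) (Set.mem_univ (l * c)) ha hb hab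
  have h1 : ((c - x) / (2 * c)) • (-(l * c)) + ((c + x) / (2 * c)) • (l * c) = l * x := by
    simp only [smul_eq_mul]; field_simp; ring
  rw [h1] at h
  refine h.trans (le_of_eq ?_)
  simp only [smul_eq_mul, Real.cosh_eq, Real.sinh_eq]
  field_simp
  ring

lemma integrable_exp_of_abs_le {Ω : Type*} [m0 : MeasurableSpace Ω] (P : Measure Ω)
    [IsProbabilityMeasure P] {X : Ω → ℝ} (hX : AEStronglyMeasurable X P) {l b : ℝ}
    (hb : ∀ᵐ ω ∂P, |X ω| ≤ b) :
    Integrable (fun ω => Real.exp (l * X ω)) P := by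
  refine Integrable.mono' (integrable_const (Real.exp (|l| * b)))
    (Real.continuous_exp.comp_aestronglyMeasurable (hX.const_mul l)) ?_
  filter_upwards [hb] with ω h
  rw [Real.norm_eq_abs, abs_of_pos (Real.exp_pos _), Real.exp_le_exp]
  calc l * X ω ≤ |l * X ω| := le_abs_self _
    _ = |l| * |X ω| := abs_mul _ _
    _ ≤ |l| * b := by
        exact mul_le_mul_of_nonneg_left h (abs_nonneg l)

lemma condExp_exp_le_cosh {Ω : Type*} [m0 : MeasurableSpace Ω] (P : Measure Ω)
    [IsProbabilityMeasure P] {m : MeasurableSpace Ω} (hm : m ≤ m0) {X : Ω → ℝ}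
    (hX : AEStronglyMeasurable[m0] X P) {c : ℝ} (hc : 0 < c) (l : ℝ)
    (hb : ∀ᵐ ω ∂P, |X ω| ≤ c) (h0 : P[X|m] =ᵐ[P] 0) :
    P[fun ω => Real.exp (l * X ω)|m] ≤ᵐ[P] fun _ => Real.cosh (l * c) := by
  set r := Real.sinh (l * c) / c with hr
  have hXint : Integrable X P := Integrable.mono' (integrable_const c) hX
    (by filter_upwards [hb] with ω h; simpa using h)
  have hexp : Integrable (fun ω => Real.exp (l * X ω)) P := integrable_exp_of_abs_le (m0 := m0) P hX hb
  have hrint : Integrable (fun ω => r * X ω) P := hXint.const_mul r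
  have hrhs : Integrable (fun ω => Real.cosh (l * c) + r * X ω) P :=
    (integrable_const _).add hrint
  have h1 : P[fun ω => Real.exp (l * X ω)|m] ≤ᵐ[P]
      P[fun ω => Real.cosh (l * c) + r * X ω|m] := by
    refine condExp_mono hexp hrhs ?_
    filter_upwards [hb] with ω h
    exact exp_le_linear l c (X ω) hc h
  have h2 : P[fun ω => Real.cosh (l * c) + r * X ω|m] =ᵐ[P]
      P[fun _ => Real.cosh (l * c)|m] + P[fun ω => r * X ω|m] :=
    condExp_add (integrable_const _) hrint m
  have h3 : P[fun ω => r * X ω|m] =ᵐ[P] r • P[X|m] := condExp_smul r X m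
  filter_upwards [h1, h2, h3, h0] with ω e1 e2 e3 e0
  refine e1.trans (le_of_eq ?_)
  rw [e2]
  simp only [Pi.add_apply, condExp_const hm, Pi.smul_apply, smul_eq_mul] at *
  rw [e3, e0]
  simp

lemma mgf_sum_le {Ω : Type*} [m0 : MeasurableSpace Ω] (P : Measure Ω)
    [IsProbabilityMeasure P] (ℱ : Filtration ℕ m0) (X : ℕ → Ω → ℝ) {c : ℝ} (hc : 0 < c)
    (l : ℝ) (T : ℕ)
    (hmeas : ∀ t ∈ Finset.Icc 1 T, StronglyMeasurable[ℱ t] (X t))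
    (hbdd : ∀ t ∈ Finset.Icc 1 T, ∀ᵐ ω ∂P, |X t ω| ≤ c)
    (hcond : ∀ t ∈ Finset.Icc 1 T, P[X t | ℱ (t - 1)] =ᵐ[P] 0) :
    ∀ n, n ≤ T → ∫ ω, Real.exp (l * ∑ t ∈ Finset.Icc 1 n, X t ω) ∂P
      ≤ Real.cosh (l * c) ^ n := by
  -- preliminary: a.e. bound and integrability of partial sums
  have hSbdd : ∀ n, n ≤ T → ∀ᵐ ω ∂P, |∑ t ∈ Finset.Icc 1 n, X t ω| ≤ n * c := by
    intro n hn
    have : ∀ᵐ ω ∂P, ∀ t ∈ Finset.Icc 1 n, |X t ω| ≤ c := by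
      rw [Filter.eventually_all_finset]
      intro t ht
      exact hbdd t (Finset.mem_Icc.2 ⟨(Finset.mem_Icc.1 ht).1, le_trans (Finset.mem_Icc.1 ht).2 hn⟩)
    filter_upwards [this] with ω h
    calc |∑ t ∈ Finset.Icc 1 n, X t ω| ≤ ∑ t ∈ Finset.Icc 1 n, |X t ω| :=
        Finset.abs_sum_le_sum_abs _ _
      _ ≤ ∑ _t ∈ Finset.Icc 1 n, c := Finset.sum_le_sum h
      _ = (Finset.Icc 1 n).card * c := by rw [Finset.sum_const, nsmul_eq_mul]
      _ ≤ n * c := by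
          have : (Finset.Icc 1 n).card ≤ n := by simp [Nat.card_Icc]
          exact mul_le_mul_of_nonneg_right (by exact_mod_cast this) hc.le
  have hSmeas : ∀ n, n ≤ T → StronglyMeasurable[ℱ n] (fun ω => ∑ t ∈ Finset.Icc 1 n, X t ω) := by
    intro n hn
    refine Finset.stronglyMeasurable_fun_sum _ (fun t ht => ?_)
    obtain ⟨ht1, ht2⟩ := Finset.mem_Icc.1 ht
    exact (hmeas t (Finset.mem_Icc.2 ⟨ht1, le_trans ht2 hn⟩)).mono (ℱ.mono ht2)
  have hSint : ∀ n, n ≤ T → Integrable (fun ω => Real.exp (l * ∑ t ∈ Finset.Icc 1 n, X t ω)) P := by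
    intro n hn
    exact integrable_exp_of_abs_le (m0 := m0) P
      (((hSmeas n hn).mono (ℱ.le n)).aestronglyMeasurable) (hSbdd n hn)
  intro n
  induction n with
  | zero => intro _; simp
  | succ n ih =>
    intro hn
    have hn' : n ≤ T := le_trans (Nat.le_succ n) hn
    have hmem : n + 1 ∈ Finset.Icc 1 T := Finset.mem_Icc.2 ⟨Nat.le_add_left 1 n, hn⟩
    set F := fun ω => Real.exp (l * ∑ t ∈ Finset.Icc 1 n, X t ω) with hF
    set G := fun ω => Real.exp (l * X (n + 1) ω) with hG
    have hFmeas : StronglyMeasurable[ℱ n] F :=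
      Real.continuous_exp.comp_stronglyMeasurable ((hSmeas n hn').const_mul l)
    have hXmem : AEStronglyMeasurable (X (n + 1)) P :=
      ((hmeas _ hmem).mono (ℱ.le _)).aestronglyMeasurable
    have hGint : Integrable G P := integrable_exp_of_abs_le (m0 := m0) P hXmem (hbdd _ hmem)
    have hFint : Integrable F P := hSint n hn'
    have hFG : Integrable (F * G) P := by
      refine Integrable.mono' (integrable_const (Real.exp (|l| * (n * c)) * Real.exp (|l| * c)))
        ((hFmeas.mono (ℱ.le n)).aestronglyMeasurable.mul hGint.1) ?_
      filter_upwards [hSbdd n hn', hbdd _ hmem] with ω h1 h2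
      rw [Pi.mul_apply, Real.norm_eq_abs, abs_mul, abs_of_pos (Real.exp_pos _),
        abs_of_pos (Real.exp_pos _)]
      have e1 : Real.exp (l * ∑ t ∈ Finset.Icc 1 n, X t ω) ≤ Real.exp (|l| * (n * c)) := by
        rw [Real.exp_le_exp]
        calc l * ∑ t ∈ Finset.Icc 1 n, X t ω ≤ |l * ∑ t ∈ Finset.Icc 1 n, X t ω| := le_abs_self _
          _ = |l| * |∑ t ∈ Finset.Icc 1 n, X t ω| := abs_mul _ _
          _ ≤ |l| * (n * c) := mul_le_mul_of_nonneg_left h1 (abs_nonneg l)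
      have e2 : Real.exp (l * X (n + 1) ω) ≤ Real.exp (|l| * c) := by
        rw [Real.exp_le_exp]
        calc l * X (n + 1) ω ≤ |l * X (n + 1) ω| := le_abs_self _
          _ = |l| * |X (n + 1) ω| := abs_mul _ _
          _ ≤ |l| * c := mul_le_mul_of_nonneg_left h2 (abs_nonneg l)
      exact mul_le_mul e1 e2 (Real.exp_pos _).le (Real.exp_pos _).le
    have hcosh : P[G|ℱ n] ≤ᵐ[P] fun _ => Real.cosh (l * c) :=
      condExp_exp_le_cosh (m0 := m0) P (ℱ.le n) hXmem hc l (hbdd _ hmem) (hcond _ hmem)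
    have hpull : P[F * G|ℱ n] =ᵐ[P] F * P[G|ℱ n] :=
      condExp_mul_of_stronglyMeasurable_left hFmeas hFG hGint
    have hGnonneg : (0:Ω → ℝ) ≤ᵐ[P] P[G|ℱ n] :=
      condExp_nonneg (Filter.Eventually.of_forall fun ω => (Real.exp_pos _).le)
    calc ∫ ω, Real.exp (l * ∑ t ∈ Finset.Icc 1 (n + 1), X t ω) ∂P
        = ∫ ω, (F * G) ω ∂P := by
          refine integral_congr_ae (Filter.Eventually.of_forall fun ω => ?_)
          simp only [Pi.mul_apply, hF, hG, ← Real.exp_add, ← mul_add]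
          rw [Finset.sum_Icc_succ_top (Nat.le_add_left 1 n)]
      _ = ∫ ω, (P[F * G|ℱ n]) ω ∂P := (integral_condExp (ℱ.le n)).symm
      _ = ∫ ω, (F * P[G|ℱ n]) ω ∂P := integral_congr_ae hpull
      _ ≤ ∫ ω, Real.cosh (l * c) * F ω ∂P := by
          refine integral_mono_of_nonneg ?_ (hFint.const_mul _) ?_
          · filter_upwards [hGnonneg] with ω h
            exact mul_nonneg (Real.exp_pos _).le h
          · filter_upwards [hcosh] with ω h
            rw [Pi.mul_apply, mul_comm (Real.cosh (l * c))]
            exact mul_le_mul_of_nonneg_left h (Real.exp_pos _).le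
      _ = Real.cosh (l * c) * ∫ ω, F ω ∂P := integral_const_mul _ _
      _ ≤ Real.cosh (l * c) * Real.cosh (l * c) ^ n :=
          mul_le_mul_of_nonneg_left (ih hn') (Real.cosh_pos (x := l * c)).le
      _ = Real.cosh (l * c) ^ (n + 1) := (pow_succ' _ _).symm

lemma azuma_one_sided {Ω : Type*} [m0 : MeasurableSpace Ω] (P : Measure Ω)
    [IsProbabilityMeasure P] (ℱ : Filtration ℕ m0) (X : ℕ → Ω → ℝ) {c : ℝ} (hc : 0 < c)
    {T : ℕ} (hT : 0 < T)
    (hmeas : ∀ t ∈ Finset.Icc 1 T, StronglyMeasurable[ℱ t] (X t))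
    (hbdd : ∀ t ∈ Finset.Icc 1 T, ∀ᵐ ω ∂P, |X t ω| ≤ c)
    (hcond : ∀ t ∈ Finset.Icc 1 T, P[X t | ℱ (t - 1)] =ᵐ[P] 0)
    {ε : ℝ} (hε : 0 ≤ ε) :
    P {ω | ε ≤ ∑ t ∈ Finset.Icc 1 T, X t ω}
      ≤ ENNReal.ofReal (Real.exp (-ε ^ 2 / (2 * T * c ^ 2))) := by
  set l : ℝ := ε / (T * c ^ 2) with hl
  have hTpos : (0:ℝ) < T := by exact_mod_cast hT
  have hl0 : 0 ≤ l := div_nonneg hε (by positivity)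
  -- integrability of exp(l * S)
  have hSbdd : ∀ᵐ ω ∂P, |∑ t ∈ Finset.Icc 1 T, X t ω| ≤ T * c := by
    have : ∀ᵐ ω ∂P, ∀ t ∈ Finset.Icc 1 T, |X t ω| ≤ c := by
      rw [Filter.eventually_all_finset]; exact hbdd
    filter_upwards [this] with ω h
    calc |∑ t ∈ Finset.Icc 1 T, X t ω| ≤ ∑ t ∈ Finset.Icc 1 T, |X t ω| :=
        Finset.abs_sum_le_sum_abs _ _
      _ ≤ ∑ _t ∈ Finset.Icc 1 T, c := Finset.sum_le_sum h
      _ = (Finset.Icc 1 T).card * c := by rw [Finset.sum_const, nsmul_eq_mul]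
      _ ≤ T * c := by
          have : (Finset.Icc 1 T).card ≤ T := by simp [Nat.card_Icc]
          exact mul_le_mul_of_nonneg_right (by exact_mod_cast this) hc.le
  have hSmeas : AEStronglyMeasurable (fun ω => ∑ t ∈ Finset.Icc 1 T, X t ω) P := by
    refine (Finset.stronglyMeasurable_fun_sum _ (fun t ht => ?_)).aestronglyMeasurable
    exact (hmeas t ht).mono (ℱ.le t)
  have hint : Integrable (fun ω => Real.exp (l * ∑ t ∈ Finset.Icc 1 T, X t ω)) P :=
    integrable_exp_of_abs_le (m0 := m0) P hSmeas hSbdd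
  have hmgf : ProbabilityTheory.mgf (fun ω => ∑ t ∈ Finset.Icc 1 T, X t ω) P l
      ≤ Real.exp (T * (l * c) ^ 2 / 2) := by
    unfold ProbabilityTheory.mgf
    calc ∫ ω, Real.exp (l * ∑ t ∈ Finset.Icc 1 T, X t ω) ∂P ≤ Real.cosh (l * c) ^ T :=
        mgf_sum_le (m0 := m0) P ℱ X hc l T hmeas hbdd hcond T le_rfl
      _ ≤ Real.exp ((l * c) ^ 2 / 2) ^ T := by
          exact pow_le_pow_left₀ (Real.cosh_pos (x := l * c)).le (Real.cosh_le_exp_half_sq _) T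
      _ = Real.exp (T * (l * c) ^ 2 / 2) := by
          rw [← Real.exp_nat_mul]; ring_nf
  have hchern := ProbabilityTheory.measure_ge_le_exp_mul_mgf
    (X := fun ω => ∑ t ∈ Finset.Icc 1 T, X t ω) (μ := P) ε hl0 hint
  have hfinal : (P {ω | ε ≤ ∑ t ∈ Finset.Icc 1 T, X t ω}).toReal
      ≤ Real.exp (-ε ^ 2 / (2 * T * c ^ 2)) := by
    refine hchern.trans ?_
    have : Real.exp (-l * ε) * ProbabilityTheory.mgf _ P l
        ≤ Real.exp (-l * ε) * Real.exp (T * (l * c) ^ 2 / 2) :=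
      mul_le_mul_of_nonneg_left hmgf (Real.exp_pos _).le
    refine this.trans (le_of_eq ?_)
    rw [← Real.exp_add]
    congr 1
    rw [hl]
    field_simp
    ring
  rw [ENNReal.le_ofReal_iff_toReal_le (measure_ne_top P _) (Real.exp_pos _).le]
  exact hfinal

lemma abs_condExp_le {Ω : Type*} [m0 : MeasurableSpace Ω] (P : Measure Ω)
    [IsProbabilityMeasure P] {m : MeasurableSpace Ω} (hm : m ≤ m0) {f : Ω → ℝ} {b : ℝ}
    (hf : Integrable f P) (h : ∀ᵐ ω ∂P, |f ω| ≤ b) :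
    ∀ᵐ ω ∂P, |(P[f|m]) ω| ≤ b := by
  have h1 : P[f|m] ≤ᵐ[P] P[fun _ => b|m] := condExp_mono hf (integrable_const b)
    (by filter_upwards [h] with ω hh; exact (abs_le.1 hh).2)
  have h2 : P[fun _ => (-b : ℝ)|m] ≤ᵐ[P] P[f|m] := condExp_mono (integrable_const _) hf
    (by filter_upwards [h] with ω hh; exact (abs_le.1 hh).1)
  rw [condExp_const hm] at h1 h2
  filter_upwards [h1, h2] with ω e1 e2
  exact abs_le.2 ⟨e2, e1⟩

/-- probabilistic core of Theorem 1: with probability at least 1 − δ,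
the regret of the contextual algorithm and the regret of the simulated linear bandit
algorithm differ by at most 2√(8 T log(4/δ)). -/
theorem contextual_linear_regret_coupling
    (d : ℕ) (Θ : Set (EuclideanSpace ℝ (Fin d))) (hΘ : Θ.Nonempty)
    (hΘball : ∀ θ ∈ Θ, ‖θ‖ ≤ 1)
    {Ω : Type*} [m0 : MeasurableSpace Ω] (μ P : Measure Ω)
    [IsProbabilityMeasure μ] [IsProbabilityMeasure P]
    (f : Ω → EuclideanSpace ℝ (Fin d) → EuclideanSpace ℝ (Fin d))
    (hmeas : ∀ θ ∈ Θ, Measurable (fun ω => f ω θ))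
    (hint : ∀ θ ∈ Θ, Integrable (fun ω => f ω θ) μ)
    (hbdd : ∀ ω : Ω, ∀ θ ∈ Θ, ‖f ω θ‖ ≤ 1)
    (hmax : ∀ ω : Ω, ∀ θ ∈ Θ, ∀ θ' ∈ Θ, ⟪f ω θ, θ'⟫ ≤ ⟪f ω θ', θ'⟫)
    (g : EuclideanSpace ℝ (Fin d) → EuclideanSpace ℝ (Fin d))
    (hg : ∀ θ ∈ Θ, g θ = ∫ ω, f ω θ ∂μ)
    (T : ℕ) (ℱ : Filtration ℕ m0)
    (θstar : EuclideanSpace ℝ (Fin d)) (hθstar : θstar ∈ Θ)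
    (α β : ℕ → Ω → EuclideanSpace ℝ (Fin d))
    (θt : ℕ → Ω → EuclideanSpace ℝ (Fin d))
    (hα_meas : ∀ t ∈ Finset.Icc 1 T, StronglyMeasurable[ℱ t] (α t))
    (hβ_meas : ∀ t ∈ Finset.Icc 1 T, StronglyMeasurable[ℱ t] (β t))
    (hα_bdd : ∀ t ∈ Finset.Icc 1 T, ∀ᵐ ω ∂P, ‖α t ω‖ ≤ 1)
    (hβ_bdd : ∀ t ∈ Finset.Icc 1 T, ∀ᵐ ω ∂P, ‖β t ω‖ ≤ 1)
    (hθt_meas : ∀ t ∈ Finset.Icc 1 T, StronglyMeasurable[ℱ (t - 1)] (θt t))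
    (hθt_mem : ∀ t ∈ Finset.Icc 1 T, ∀ ω : Ω, θt t ω ∈ Θ)
    (hcondα : ∀ t ∈ Finset.Icc 1 T,
      P[fun ω => ⟪α t ω, θstar⟫ | ℱ (t - 1)] =ᵐ[P] fun ω => ⟪g (θt t ω), θstar⟫)
    (hcondβ : ∀ t ∈ Finset.Icc 1 T,
      P[fun ω => ⟪β t ω, θstar⟫ | ℱ (t - 1)] =ᵐ[P] fun _ => ⟪g θstar, θstar⟫) :
    ∀ δ : ℝ, 0 < δ → δ < 1 →
      ENNReal.ofReal (1 - δ) ≤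
        P {ω | |(∑ t ∈ Finset.Icc 1 T, ⟪β t ω - α t ω, θstar⟫) -
                ∑ t ∈ Finset.Icc 1 T, ⟪g θstar - g (θt t ω), θstar⟫|
              ≤ 2 * Real.sqrt (8 * T * Real.log (4 / δ))} := by
  intro δ hδ0 hδ1
  rcases Nat.eq_zero_or_pos T with hT0 | hT
  · subst hT0
    have : {ω | |(∑ t ∈ Finset.Icc 1 0, ⟪β t ω - α t ω, θstar⟫) -
        ∑ t ∈ Finset.Icc 1 0, ⟪g θstar - g (θt t ω), θstar⟫|
          ≤ 2 * Real.sqrt (8 * (0:ℕ) * Real.log (4 / δ))} = Set.univ := by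
      ext ω; simp
    rw [this]
    simp only [measure_univ]
    exact ENNReal.ofReal_le_one.2 (by linarith)
  -- setup
  have hθn : ‖θstar‖ ≤ 1 := hΘball _ hθstar
  set ε₀ : ℝ := Real.sqrt (8 * T * Real.log (4 / δ)) with hε₀def
  have hTpos : (0:ℝ) < T := by exact_mod_cast hT
  have hlog : 0 < Real.log (4 / δ) := Real.log_pos (by rw [lt_div_iff₀ hδ0]; linarith)
  have hε₀ : 0 ≤ ε₀ := Real.sqrt_nonneg _
  have hε₀sq : ε₀ ^ 2 = 8 * T * Real.log (4 / δ) := Real.sq_sqrt (by positivity)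
  -- the martingale differences
  set fα : ℕ → Ω → ℝ := fun t ω => ⟪α t ω, θstar⟫ with hfα
  set fβ : ℕ → Ω → ℝ := fun t ω => ⟪β t ω, θstar⟫ with hfβ
  set cα : ℕ → Ω → ℝ := fun t => P[fα t | ℱ (t - 1)] with hcα
  set cβ : ℕ → Ω → ℝ := fun t => P[fβ t | ℱ (t - 1)] with hcβ
  set A : ℕ → Ω → ℝ := fun t ω => fα t ω - cα t ω with hA
  set B : ℕ → Ω → ℝ := fun t ω => fβ t ω - cβ t ω with hB
  have hinner_cont : Continuous (fun x : EuclideanSpace ℝ (Fin d) => ⟪x, θstar⟫) :=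
    continuous_id.inner continuous_const
  -- generic facts, stated for a family with the properties of α and β
  have key : ∀ (γ : ℕ → Ω → EuclideanSpace ℝ (Fin d)),
      (∀ t ∈ Finset.Icc 1 T, StronglyMeasurable[ℱ t] (γ t)) →
      (∀ t ∈ Finset.Icc 1 T, ∀ᵐ ω ∂P, ‖γ t ω‖ ≤ 1) →
      ∀ t ∈ Finset.Icc 1 T,
        StronglyMeasurable[ℱ t] (fun ω => ⟪γ t ω, θstar⟫ - (P[fun ω => ⟪γ t ω, θstar⟫ | ℱ (t-1)]) ω)
        ∧ (∀ᵐ ω ∂P, |(fun ω => ⟪γ t ω, θstar⟫ - (P[fun ω => ⟪γ t ω, θstar⟫ | ℱ (t-1)]) ω) ω| ≤ 2)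
        ∧ P[(fun ω => ⟪γ t ω, θstar⟫ - (P[fun ω => ⟪γ t ω, θstar⟫ | ℱ (t-1)]) ω) | ℱ (t-1)] =ᵐ[P] 0 := by
    intro γ hγm hγb t ht
    have hfm : StronglyMeasurable[ℱ t] (fun ω => ⟪γ t ω, θstar⟫) :=
      hinner_cont.comp_stronglyMeasurable (hγm t ht)
    have hfb : ∀ᵐ ω ∂P, |⟪γ t ω, θstar⟫| ≤ 1 := by
      filter_upwards [hγb t ht] with ω h
      calc |⟪γ t ω, θstar⟫| ≤ ‖γ t ω‖ * ‖θstar‖ := abs_real_inner_le_norm _ _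
        _ ≤ 1 * 1 := mul_le_mul h hθn (norm_nonneg _) zero_le_one
        _ = 1 := one_mul 1
    have hfint : Integrable (fun ω => ⟪γ t ω, θstar⟫) P := by
      refine Integrable.mono' (integrable_const 1) ((hfm.mono (ℱ.le t)).aestronglyMeasurable) ?_
      filter_upwards [hfb] with ω h; simpa using h
    have hcm : StronglyMeasurable[ℱ (t-1)] (P[fun ω => ⟪γ t ω, θstar⟫ | ℱ (t-1)]) :=
      stronglyMeasurable_condExp
    have hcb : ∀ᵐ ω ∂P, |(P[fun ω => ⟪γ t ω, θstar⟫ | ℱ (t-1)]) ω| ≤ 1 :=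
      abs_condExp_le (m0 := m0) P (ℱ.le _) hfint hfb
    refine ⟨hfm.sub (hcm.mono (ℱ.mono (Nat.sub_le t 1))), ?_, ?_⟩
    · filter_upwards [hfb, hcb] with ω h1 h2
      calc |⟪γ t ω, θstar⟫ - (P[fun ω => ⟪γ t ω, θstar⟫ | ℱ (t-1)]) ω|
          ≤ |⟪γ t ω, θstar⟫| + |(P[fun ω => ⟪γ t ω, θstar⟫ | ℱ (t-1)]) ω| := abs_sub _ _
        _ ≤ 1 + 1 := add_le_add h1 h2
        _ = 2 := by norm_num
    · have hsub := condExp_sub (m := ℱ (t-1)) (μ := P) hfint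
        (integrable_condExp (f := fun ω => ⟪γ t ω, θstar⟫) (m := ℱ (t-1)))
      have hfix : P[P[fun ω => ⟪γ t ω, θstar⟫ | ℱ (t-1)] | ℱ (t-1)]
          = P[fun ω => ⟪γ t ω, θstar⟫ | ℱ (t-1)] :=
        condExp_of_stronglyMeasurable (ℱ.le _) stronglyMeasurable_condExp integrable_condExp
      refine hsub.trans ?_
      rw [hfix]
      filter_upwards with ω
      simp
  have keyα := key α hα_meas hα_bdd
  have keyβ := key β hβ_meas hβ_bdd
  -- tail bound value
  have htail : Real.exp (-ε₀ ^ 2 / (2 * T * 2 ^ 2)) = δ / 4 := by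
    have h1 : -ε₀ ^ 2 / (2 * T * 2 ^ 2) = -Real.log (4 / δ) := by
      rw [hε₀sq]; field_simp; ring
    rw [h1, Real.exp_neg, Real.exp_log (by positivity), inv_div]
  -- the four azuma applications
  have hc2 : (0:ℝ) < 2 := two_pos
  have azA := azuma_one_sided (m0 := m0) P ℱ A hc2 hT
    (fun t ht => (keyα t ht).1) (fun t ht => (keyα t ht).2.1) (fun t ht => (keyα t ht).2.2) hε₀
  have azA' := azuma_one_sided (m0 := m0) P ℱ (fun t ω => -(A t ω)) hc2 hT
    (fun t ht => (keyα t ht).1.neg) (fun t ht => by filter_upwards [(keyα t ht).2.1] with ω h; simpa using h)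
    (fun t ht => by
      have h1 : P[fun ω => -(A t ω) | ℱ (t-1)] =ᵐ[P] -P[A t | ℱ (t-1)] := condExp_neg (A t) (ℱ (t-1))
      refine h1.trans ?_
      filter_upwards [(keyα t ht).2.2] with ω h
      simp [show P[A t | ℱ (t-1)] ω = 0 from h]) hε₀
  have azB := azuma_one_sided (m0 := m0) P ℱ B hc2 hT
    (fun t ht => (keyβ t ht).1) (fun t ht => (keyβ t ht).2.1) (fun t ht => (keyβ t ht).2.2) hε₀
  have azB' := azuma_one_sided (m0 := m0) P ℱ (fun t ω => -(B t ω)) hc2 hT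
    (fun t ht => (keyβ t ht).1.neg) (fun t ht => by filter_upwards [(keyβ t ht).2.1] with ω h; simpa using h)
    (fun t ht => by
      have h1 : P[fun ω => -(B t ω) | ℱ (t-1)] =ᵐ[P] -P[B t | ℱ (t-1)] := condExp_neg (B t) (ℱ (t-1))
      refine h1.trans ?_
      filter_upwards [(keyβ t ht).2.2] with ω h
      simp [show P[B t | ℱ (t-1)] ω = 0 from h]) hε₀
  rw [htail] at azA azA' azB azB'
  -- partial sums
  set SA : Ω → ℝ := fun ω => ∑ t ∈ Finset.Icc 1 T, A t ω with hSA
  set SB : Ω → ℝ := fun ω => ∑ t ∈ Finset.Icc 1 T, B t ω with hSB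
  have hnegA : {ω | ε₀ ≤ ∑ t ∈ Finset.Icc 1 T, -(A t ω)} = {ω | ε₀ ≤ -SA ω} := by
    ext ω; simp [hSA]
  have hnegB : {ω | ε₀ ≤ ∑ t ∈ Finset.Icc 1 T, -(B t ω)} = {ω | ε₀ ≤ -SB ω} := by
    ext ω; simp [hSB]
  rw [hnegA] at azA'
  rw [hnegB] at azB'
  -- the good set
  set good : Set Ω := {ω | |SB ω - SA ω| ≤ 2 * ε₀} with hgood
  have hSAm : Measurable SA := by
    refine Finset.measurable_sum _ (fun t ht => ?_)
    exact (((keyα t ht).1.mono (ℱ.le t)).measurable)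
  have hSBm : Measurable SB := by
    refine Finset.measurable_sum _ (fun t ht => ?_)
    exact (((keyβ t ht).1.mono (ℱ.le t)).measurable)
  have hgoodm : MeasurableSet good := by
    exact measurableSet_le ((hSBm.sub hSAm).abs) measurable_const
  -- bad set bound
  have hbad : P goodᶜ ≤ ENNReal.ofReal δ := by
    have hsub : goodᶜ ⊆ {ω | ε₀ ≤ SA ω} ∪ ({ω | ε₀ ≤ -SA ω} ∪ ({ω | ε₀ ≤ SB ω} ∪ {ω | ε₀ ≤ -SB ω})) := by
      intro ω hω
      simp only [Set.mem_compl_iff, hgood, Set.mem_setOf_eq, not_le, Set.mem_union] at hω ⊢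
      by_contra h
      push_neg at h
      obtain ⟨h1, h2, h3, h4⟩ := h
      have := abs_le.2 ⟨(by linarith : -(2 * ε₀) ≤ SB ω - SA ω), (by linarith : SB ω - SA ω ≤ 2 * ε₀)⟩
      linarith
    calc P goodᶜ ≤ P ({ω | ε₀ ≤ SA ω} ∪ ({ω | ε₀ ≤ -SA ω} ∪ ({ω | ε₀ ≤ SB ω} ∪ {ω | ε₀ ≤ -SB ω}))) :=
        measure_mono hsub
      _ ≤ P {ω | ε₀ ≤ SA ω} + (P {ω | ε₀ ≤ -SA ω} + (P {ω | ε₀ ≤ SB ω} + P {ω | ε₀ ≤ -SB ω})) := by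
          refine (measure_union_le _ _).trans ?_
          refine add_le_add le_rfl ?_
          refine (measure_union_le _ _).trans ?_
          exact add_le_add le_rfl (measure_union_le _ _)
      _ ≤ ENNReal.ofReal (δ/4) + (ENNReal.ofReal (δ/4) + (ENNReal.ofReal (δ/4) + ENNReal.ofReal (δ/4))) := by
          exact add_le_add azA (add_le_add azA' (add_le_add azB azB'))
      _ = ENNReal.ofReal δ := by
          rw [← ENNReal.ofReal_add (by positivity) (by positivity),
            ← ENNReal.ofReal_add (by positivity) (by positivity),
            ← ENNReal.ofReal_add (by positivity) (by positivity)]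
          congr 1
          ring
  -- good set has large measure
  have hgoodP : ENNReal.ofReal (1 - δ) ≤ P good := by
    have hcompl : P good = 1 - P goodᶜ := by
      rw [← compl_compl good, prob_compl_eq_one_sub hgoodm.compl, compl_compl]
    rw [hcompl]
    calc ENNReal.ofReal (1 - δ) = 1 - ENNReal.ofReal δ := by
          rw [ENNReal.ofReal_sub _ hδ0.le, ENNReal.ofReal_one]
      _ ≤ 1 - P goodᶜ := tsub_le_tsub_left hbad 1
  -- transfer to the target set
  refine hgoodP.trans (measure_mono_ae ?_)
  have hagree : ∀ᵐ ω ∂P, ∀ t ∈ Finset.Icc 1 T,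
      cα t ω = ⟪g (θt t ω), θstar⟫ ∧ cβ t ω = ⟪g θstar, θstar⟫ := by
    rw [Filter.eventually_all_finset]
    intro t ht
    filter_upwards [hcondα t ht, hcondβ t ht] with ω h1 h2
    exact ⟨h1, h2⟩
  filter_upwards [hagree] with ω hag
  intro hω
  have hω2 : |SB ω - SA ω| ≤ 2 * ε₀ := hω
  have hrewrite : (∑ t ∈ Finset.Icc 1 T, ⟪β t ω - α t ω, θstar⟫) -
      ∑ t ∈ Finset.Icc 1 T, ⟪g θstar - g (θt t ω), θstar⟫ = SB ω - SA ω := by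
    rw [hSA, hSB]
    rw [← Finset.sum_sub_distrib, ← Finset.sum_sub_distrib]
    refine Finset.sum_congr rfl (fun t ht => ?_)
    obtain ⟨e1, e2⟩ := hag t ht
    simp only [hA, hB, hfα, hfβ, inner_sub_left, e1, e2]
    ring
  show |(∑ t ∈ Finset.Icc 1 T, ⟪β t ω - α t ω, θstar⟫) -
      ∑ t ∈ Finset.Icc 1 T, ⟪g θstar - g (θt t ω), θstar⟫| ≤ 2 * ε₀
  rw [hrewrite]
  exact hω2
end

section
/- (Proposition 2, uniform accuracy of the empirical estimate of g.) Let T ≥ 1, let Θ' ⊆ Θ be a finite (1/T)-net of Θ, let n ≥ 1, let ω_1, …, ω_n be i.i.d. Ω-valued random elements with law μ, and define the empirical estimate g_n(θ) = (1/n) Σ_{i=1}^n f(ω_i, θ) for θ ∈ Θ'. Then for every δ ∈ (0,1), with probability at least 1 − δ, simultaneously for all θ ∈ Θ' and all θ' ∈ Θ: |⟨g(θ) − g_n(θ), θ'⟩| ≤ 2√( log(2|Θ'|²/δ) / n ) + 2/T. -/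
open MeasureTheory
open scoped RealInnerProductSpace

section AuxLemmas
open Real ProbabilityTheory


lemma cpos (m : ℝ) (hm : |m| ≤ 1) (u : ℝ) : 0 < Real.cosh u + m * Real.sinh u := by
  obtain ⟨hm1, hm2⟩ := abs_le.mp hm
  have h1 := Real.cosh_add_sinh u
  have h2 := Real.cosh_sub_sinh u
  have e1 := Real.exp_pos u
  have e2 := Real.exp_pos (-u)
  rcases le_or_gt 0 (Real.sinh u) with hs | hs
  · nlinarith
  · nlinarith

lemma hoeff_core (m t : ℝ) (hm : |m| ≤ 1) :
    Real.exp (-(t * m)) * (Real.cosh t + m * Real.sinh t) ≤ Real.exp (t ^ 2) := by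
  -- reduce to t ≥ 0 by symmetry
  have key : ∀ m t : ℝ, |m| ≤ 1 → 0 ≤ t →
      Real.exp (-(t * m)) * (Real.cosh t + m * Real.sinh t) ≤ Real.exp (t ^ 2) := by
    intro m t hm ht
    obtain ⟨hm1, hm2⟩ := abs_le.mp hm
    set ψ : ℝ → ℝ := fun u => u ^ 2 + u * m - Real.log (Real.cosh u + m * Real.sinh u) with hψ
    set ψ' : ℝ → ℝ := fun u =>
      2 * u + m - (Real.sinh u + m * Real.cosh u) / (Real.cosh u + m * Real.sinh u) with hψ'
    have hc := cpos m hm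
    have hd1 : ∀ u, HasDerivAt ψ (ψ' u) u := by
      intro u
      have h1 : HasDerivAt (fun u : ℝ => Real.cosh u + m * Real.sinh u)
          (Real.sinh u + m * Real.cosh u) u :=
        (Real.hasDerivAt_cosh u).add ((Real.hasDerivAt_sinh u).const_mul m)
      have h2 : HasDerivAt (fun u : ℝ => Real.log (Real.cosh u + m * Real.sinh u))
          ((Real.sinh u + m * Real.cosh u) / (Real.cosh u + m * Real.sinh u)) u := by
        simpa [div_eq_mul_inv, mul_comm] using h1.log (hc u).ne'
      have h3 : HasDerivAt (fun u : ℝ => u ^ 2 + u * m) (2 * u + m) u := by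
        simpa using ((hasDerivAt_pow 2 u).fun_add ((hasDerivAt_id u).mul_const m))
      simpa [hψ, hψ'] using h3.fun_sub h2
    have hd2 : ∀ u, HasDerivAt ψ'
        (2 - ((Real.cosh u + m * Real.sinh u) ^ 2 - (Real.sinh u + m * Real.cosh u) ^ 2)
          / (Real.cosh u + m * Real.sinh u) ^ 2) u := by
      intro u
      have h1 : HasDerivAt (fun u : ℝ => Real.cosh u + m * Real.sinh u)
          (Real.sinh u + m * Real.cosh u) u :=
        (Real.hasDerivAt_cosh u).add ((Real.hasDerivAt_sinh u).const_mul m)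
      have h1' : HasDerivAt (fun u : ℝ => Real.sinh u + m * Real.cosh u)
          (Real.cosh u + m * Real.sinh u) u :=
        (Real.hasDerivAt_sinh u).add ((Real.hasDerivAt_cosh u).const_mul m)
      have hq := h1'.fun_div h1 (hc u).ne'
      have h3 : HasDerivAt (fun u : ℝ => 2 * u + m) 2 u := by
        simpa using ((hasDerivAt_id u).const_mul 2).add_const m
      have := h3.fun_sub hq
      refine this.congr_deriv ?_
      ring
    have hψ'nonneg : ∀ u, 0 ≤ u → 0 ≤ ψ' u := by
      have hmono : Monotone ψ' := by
        apply monotone_of_deriv_nonneg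
        · exact fun u => (hd2 u).differentiableAt
        · intro u
          rw [(hd2 u).deriv]
          have hcu := hc u
          have : ((Real.cosh u + m * Real.sinh u) ^ 2 - (Real.sinh u + m * Real.cosh u) ^ 2)
              / (Real.cosh u + m * Real.sinh u) ^ 2 ≤ 1 := by
            rw [div_le_one (by positivity)]
            nlinarith [sq_nonneg (Real.sinh u + m * Real.cosh u)]
          linarith
      intro u hu
      have h0 : ψ' 0 = 0 := by simp [hψ']
      have := hmono hu
      rw [h0] at this
      exact this
    have hψmono : MonotoneOn ψ (Set.Ici (0 : ℝ)) := by
      apply monotoneOn_of_deriv_nonneg (convex_Ici 0)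
      · exact (fun u _ => (hd1 u).differentiableAt.continuousAt.continuousWithinAt)
      · exact fun u _ => (hd1 u).differentiableAt.differentiableWithinAt
      · intro u hu
        rw [interior_Ici] at hu
        rw [(hd1 u).deriv]
        exact hψ'nonneg u (le_of_lt hu)
    have hψt : 0 ≤ ψ t := by
      have h0 : ψ 0 = 0 := by simp [hψ]
      have := hψmono (Set.self_mem_Ici) (Set.mem_Ici.mpr ht) ht
      rw [h0] at this; exact this
    -- unfold
    have hlog : Real.log (Real.cosh t + m * Real.sinh t) ≤ t ^ 2 + t * m := by
      simp only [hψ] at hψt; linarith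
    have hcle : Real.cosh t + m * Real.sinh t ≤ Real.exp (t ^ 2 + t * m) :=
      (Real.log_le_iff_le_exp (hc t)).mp hlog
    calc Real.exp (-(t * m)) * (Real.cosh t + m * Real.sinh t)
        ≤ Real.exp (-(t * m)) * Real.exp (t ^ 2 + t * m) := by
          exact mul_le_mul_of_nonneg_left hcle (Real.exp_pos _).le
      _ = Real.exp (t ^ 2) := by rw [← Real.exp_add]; ring_nf
  rcases le_or_gt 0 t with ht | ht
  · exact key m t hm ht
  · have := key (-m) (-t) (by simpa using hm) (by linarith)
    simpa [Real.cosh_neg, Real.sinh_neg, neg_mul, mul_neg, mul_comm] using this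

lemma mgf_one {Ω : Type*} [MeasurableSpace Ω] (μ : Measure Ω) [IsProbabilityMeasure μ]
    (Z : Ω → ℝ) (hZm : Measurable Z) (hZb : ∀ ω, |Z ω| ≤ 1) (t : ℝ) :
    ∫ ω, Real.exp (t * (Z ω - ∫ ω, Z ω ∂μ)) ∂μ ≤ Real.exp (t ^ 2) := by
  have hZint : Integrable Z μ := by
    refine ⟨hZm.aestronglyMeasurable, ?_⟩
    exact (hasFiniteIntegral_const (1:ℝ)).mono' (Filter.Eventually.of_forall fun ω => by
      simpa using hZb ω)
  set m : ℝ := ∫ ω, Z ω ∂μ with hm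
  have hmb : |m| ≤ 1 := by
    calc |m| ≤ ∫ ω, |Z ω| ∂μ := by simpa using norm_integral_le_integral_norm (μ := μ) Z
      _ ≤ ∫ _ω, (1:ℝ) ∂μ := integral_mono hZint.abs (integrable_const 1) (fun ω => hZb ω)
      _ = 1 := by simp
  -- pointwise convexity bound
  have hpt : ∀ ω, Real.exp (t * Z ω) ≤
      (1 + Z ω) / 2 * Real.exp t + (1 - Z ω) / 2 * Real.exp (-t) := by
    intro ω
    obtain ⟨h1, h2⟩ := abs_le.mp (hZb ω)
    have ha : (0:ℝ) ≤ (1 + Z ω) / 2 := by linarith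
    have hb : (0:ℝ) ≤ (1 - Z ω) / 2 := by linarith
    have hab : (1 + Z ω) / 2 + (1 - Z ω) / 2 = 1 := by ring
    have := convexOn_exp.2 (Set.mem_univ t) (Set.mem_univ (-t)) ha hb hab
    simp only [smul_eq_mul] at this
    have harg : (1 + Z ω) / 2 * t + (1 - Z ω) / 2 * (-t) = t * Z ω := by ring
    rwa [harg] at this
  have hintexp : Integrable (fun ω => Real.exp (t * Z ω)) μ := by
    refine ⟨((hZm.const_mul t).exp).aestronglyMeasurable, ?_⟩
    refine (hasFiniteIntegral_const (Real.exp |t|)).mono'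
      (Filter.Eventually.of_forall fun ω => ?_)
    rw [Real.norm_eq_abs, Real.abs_exp, Real.exp_le_exp]
    calc t * Z ω ≤ |t * Z ω| := le_abs_self _
      _ = |t| * |Z ω| := abs_mul t (Z ω)
      _ ≤ |t| * 1 := by gcongr; exact hZb ω
      _ = |t| := mul_one _
  have hbound : ∫ ω, Real.exp (t * Z ω) ∂μ ≤ Real.cosh t + m * Real.sinh t := by
    have : ∫ ω, ((1 + Z ω) / 2 * Real.exp t + (1 - Z ω) / 2 * Real.exp (-t)) ∂μ
        = (1 + m) / 2 * Real.exp t + (1 - m) / 2 * Real.exp (-t) := by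
      rw [integral_add, integral_mul_const, integral_mul_const]
      · congr 1
        · congr 1
          rw [integral_div, integral_add (integrable_const 1) hZint]
          simp [hm]
        · congr 1
          rw [integral_div, integral_sub (integrable_const 1) hZint]
          simp [hm]
      · exact (((integrable_const 1).add hZint).div_const 2).mul_const _
      · exact (((integrable_const 1).sub hZint).div_const 2).mul_const _
    have hle : ∫ ω, Real.exp (t * Z ω) ∂μ
        ≤ ∫ ω, ((1 + Z ω) / 2 * Real.exp t + (1 - Z ω) / 2 * Real.exp (-t)) ∂μ := by
      refine integral_mono hintexp ?_ hpt
      exact ((((integrable_const 1).add hZint).div_const 2).mul_const _).add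
        ((((integrable_const 1).sub hZint).div_const 2).mul_const _)
    rw [this] at hle
    have : (1 + m) / 2 * Real.exp t + (1 - m) / 2 * Real.exp (-t)
        = Real.cosh t + m * Real.sinh t := by
      rw [Real.cosh_eq, Real.sinh_eq]; ring
    linarith
  have hsplit : ∫ ω, Real.exp (t * (Z ω - m)) ∂μ
      = Real.exp (-(t * m)) * ∫ ω, Real.exp (t * Z ω) ∂μ := by
    rw [← integral_const_mul]
    congr 1; funext ω
    rw [← Real.exp_add]; ring_nf
  rw [hsplit]
  calc Real.exp (-(t * m)) * ∫ ω, Real.exp (t * Z ω) ∂μ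
      ≤ Real.exp (-(t * m)) * (Real.cosh t + m * Real.sinh t) :=
        mul_le_mul_of_nonneg_left hbound (Real.exp_pos _).le
    _ ≤ Real.exp (t ^ 2) := hoeff_core m t hmb

lemma tail_one_side {Ω Ω' : Type*} [mΩ : MeasurableSpace Ω] [mΩ' : MeasurableSpace Ω']
    (μ : Measure Ω) [IsProbabilityMeasure μ] (P : Measure Ω') [IsProbabilityMeasure P]
    {n : ℕ} (X : Fin n → Ω' → Ω) (hX_meas : ∀ i, Measurable (X i))
    (hX_indep : iIndepFun (m := fun _ => mΩ) X P) (hX_law : ∀ i, P.map (X i) = μ)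
    (Z : Ω → ℝ) (hZm : Measurable Z) (hZb : ∀ ω, |Z ω| ≤ 1) (ε : ℝ) (hε : 0 ≤ ε) :
    (P {ω' | (n : ℝ) * ε ≤ ∑ i : Fin n, (Z (X i ω') - ∫ ω, Z ω ∂μ)}).toReal
      ≤ Real.exp (-(n : ℝ) * ε ^ 2 / 4) := by
  set m : ℝ := ∫ ω, Z ω ∂μ with hm
  set Y : Fin n → Ω' → ℝ := fun i ω' => Z (X i ω') - m with hY
  set t : ℝ := ε / 2 with htdef
  have ht : 0 ≤ t := by positivity
  have hYmeas : ∀ i, Measurable (Y i) := fun i => ((hZm.comp (hX_meas i)).sub_const m)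
  have hYindep : iIndepFun Y P := by
    have := hX_indep.comp (fun _ ω => Z ω - m) (fun _ => hZm.sub_const m)
    exact this
  have hYint : ∀ i ∈ Finset.univ, Integrable (fun ω' => Real.exp (t * Y i ω')) P := by
    intro i _
    refine ⟨((hYmeas i).const_mul t).exp.aestronglyMeasurable, ?_⟩
    refine (hasFiniteIntegral_const (Real.exp (|t| * 2))).mono'
      (Filter.Eventually.of_forall fun ω' => ?_)
    rw [Real.norm_eq_abs, Real.abs_exp, Real.exp_le_exp]
    have h1 : |Y i ω'| ≤ 2 := by
      have := hZb (X i ω')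
      have hmb : |m| ≤ 1 := by
        calc |m| ≤ ∫ ω, |Z ω| ∂μ := by simpa using norm_integral_le_integral_norm (μ := μ) Z
          _ ≤ ∫ _ω, (1:ℝ) ∂μ := by
              have hZint : Integrable Z μ :=
                ⟨hZm.aestronglyMeasurable, (hasFiniteIntegral_const (1:ℝ)).mono'
                  (Filter.Eventually.of_forall fun ω => by simpa using hZb ω)⟩
              exact integral_mono hZint.abs (integrable_const 1) (fun ω => hZb ω)
          _ = 1 := by simp
      calc |Y i ω'| = |Z (X i ω') - m| := rfl
        _ ≤ |Z (X i ω')| + |m| := abs_sub _ _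
        _ ≤ 2 := by linarith
    calc t * Y i ω' ≤ |t * Y i ω'| := le_abs_self _
      _ = |t| * |Y i ω'| := abs_mul _ _
      _ ≤ |t| * 2 := by gcongr
  have hSint : Integrable (fun ω' => Real.exp (t * (∑ i, Y i) ω')) P :=
    hYindep.integrable_exp_mul_sum hYmeas hYint
  have hmgf_each : ∀ i, mgf (Y i) P t ≤ Real.exp (t ^ 2) := by
    intro i
    have hmap : mgf (Y i) P t = ∫ ω, Real.exp (t * (Z ω - m)) ∂μ := by
      rw [mgf, ← hX_law i,
        integral_map (hX_meas i).aemeasurable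
          (((hZm.sub_const m).const_mul t).exp).aestronglyMeasurable]
    rw [hmap, hm]
    exact mgf_one μ Z hZm hZb t
  have hmgf_sum : mgf (∑ i, Y i) P t ≤ Real.exp ((n : ℝ) * t ^ 2) := by
    rw [hYindep.mgf_sum hYmeas]
    calc ∏ i : Fin n, mgf (Y i) P t ≤ ∏ _i : Fin n, Real.exp (t ^ 2) :=
          Finset.prod_le_prod (fun i _ => mgf_nonneg) (fun i _ => hmgf_each i)
      _ = Real.exp ((n : ℝ) * t ^ 2) := by
          rw [Finset.prod_const, ← Real.exp_nat_mul]; simp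
  have hcher := measure_ge_le_exp_mul_mgf (μ := P) (X := ∑ i, Y i) ((n : ℝ) * ε) ht hSint
  have hset : {ω' | (n : ℝ) * ε ≤ ∑ i : Fin n, (Z (X i ω') - m)}
      = {ω' | (n : ℝ) * ε ≤ (∑ i, Y i) ω'} := by
    ext ω'; simp [hY, Finset.sum_apply]
  rw [hset]
  calc (P {ω' | (n : ℝ) * ε ≤ (∑ i, Y i) ω'}).toReal
      ≤ Real.exp (-t * ((n : ℝ) * ε)) * mgf (∑ i, Y i) P t := hcher
    _ ≤ Real.exp (-t * ((n : ℝ) * ε)) * Real.exp ((n : ℝ) * t ^ 2) :=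
        mul_le_mul_of_nonneg_left hmgf_sum (Real.exp_pos _).le
    _ = Real.exp (-(n : ℝ) * ε ^ 2 / 4) := by
        rw [← Real.exp_add]; congr 1; rw [htdef]; ring

lemma card_smul_aux (c : ℕ) (r δ : ℝ) (hc : 1 ≤ c) (hδ : 0 < δ)
    (hr : r = δ / (2 * (c : ℝ) ^ 2)) :
    (c * c) • (ENNReal.ofReal r + ENNReal.ofReal r) = ENNReal.ofReal δ := by
  have hc0 : (0:ℝ) < (c:ℝ) := by exact_mod_cast hc
  have hr0 : 0 ≤ r := by rw [hr]; positivity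
  rw [← ENNReal.ofReal_add hr0 hr0, nsmul_eq_mul,
    ← ENNReal.ofReal_natCast (c * c), ← ENNReal.ofReal_mul (by positivity)]
  congr 1
  rw [hr]
  push_cast
  field_simp
  ring

end AuxLemmas

set_option maxHeartbeats 2000000

/-- Proposition 2: uniform accuracy of the empirical estimate
g_n(θ) = (1/n) Σ_{i=1}^n f(ω_i, θ) of g over a finite (1/T)-net Θ' ⊆ Θ: with probability
at least 1 − δ, for all θ ∈ Θ' and θ' ∈ Θ,
|⟨g(θ) − g_n(θ), θ'⟩| ≤ 2√(log(2|Θ'|²/δ)/n) + 2/T. -/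
theorem empirical_g_uniform_accuracy
    (d : ℕ) (Θ : Set (EuclideanSpace ℝ (Fin d))) (hΘ : Θ.Nonempty)
    (hΘball : ∀ θ ∈ Θ, ‖θ‖ ≤ 1)
    {Ω : Type*} [mΩ : MeasurableSpace Ω] (μ : Measure Ω) [IsProbabilityMeasure μ]
    (f : Ω → EuclideanSpace ℝ (Fin d) → EuclideanSpace ℝ (Fin d))
    (hmeas : ∀ θ ∈ Θ, Measurable (fun ω => f ω θ))
    (hint : ∀ θ ∈ Θ, Integrable (fun ω => f ω θ) μ)
    (hbdd : ∀ ω : Ω, ∀ θ ∈ Θ, ‖f ω θ‖ ≤ 1)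
    (hmax : ∀ ω : Ω, ∀ θ ∈ Θ, ∀ θ' ∈ Θ, ⟪f ω θ, θ'⟫ ≤ ⟪f ω θ', θ'⟫)
    (g : EuclideanSpace ℝ (Fin d) → EuclideanSpace ℝ (Fin d))
    (hg : ∀ θ ∈ Θ, g θ = ∫ ω, f ω θ ∂μ)
    (T : ℝ) (hT : 1 ≤ T)
    (Θ' : Finset (EuclideanSpace ℝ (Fin d))) (hsub : ↑Θ' ⊆ Θ)
    (hnet : ∀ θ ∈ Θ, ∃ φ ∈ Θ', ‖θ - φ‖ ≤ 1 / T)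
    (n : ℕ) (hn : 1 ≤ n)
    {Ω' : Type*} [mΩ' : MeasurableSpace Ω'] (P : Measure Ω') [IsProbabilityMeasure P]
    (X : Fin n → Ω' → Ω)
    (hX_meas : ∀ i, Measurable (X i))
    (hX_indep : ProbabilityTheory.iIndepFun (m := fun _ => mΩ) X P)
    (hX_law : ∀ i, P.map (X i) = μ) :
    ∀ δ : ℝ, 0 < δ → δ < 1 →
      ENNReal.ofReal (1 - δ) ≤
        P {ω' | ∀ θ ∈ Θ', ∀ θ' ∈ Θ,
          |⟪g θ - (n : ℝ)⁻¹ • ∑ i : Fin n, f (X i ω') θ, θ'⟫|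
            ≤ 2 * Real.sqrt (Real.log (2 * (Θ'.card : ℝ) ^ 2 / δ) / n) + 2 / T} := by
  intro δ hδ0 hδ1
  classical
  obtain ⟨θ₀, hθ₀⟩ := hΘ
  obtain ⟨φ₀, hφ₀, _⟩ := hnet θ₀ hθ₀
  have hK1 : 1 ≤ Θ'.card := Finset.card_pos.mpr ⟨φ₀, hφ₀⟩
  set K : ℝ := (Θ'.card : ℝ) with hKdef
  have hKpos : (1:ℝ) ≤ K := by rw [hKdef]; exact_mod_cast hK1
  have hnpos : (0:ℝ) < n := by exact_mod_cast hn
  have hT0 : (0:ℝ) < T := lt_of_lt_of_le one_pos hT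
  set L : ℝ := Real.log (2 * K ^ 2 / δ) with hLdef
  have hL0 : 0 < L := by
    apply Real.log_pos
    rw [lt_div_iff₀ hδ0]
    nlinarith
  set ε : ℝ := 2 * Real.sqrt (L / n) with hεdef
  have hε0 : 0 ≤ ε := by positivity
  have hεsq : (n : ℝ) * ε ^ 2 / 4 = L := by
    have h : Real.sqrt (L / n) ^ 2 = L / n := Real.sq_sqrt (by positivity)
    rw [hεdef, mul_pow, h]
    field_simp
    ring
  set r : ℝ := Real.exp (-(n : ℝ) * ε ^ 2 / 4) with hrdef
  have hr : r = δ / (2 * K ^ 2) := by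
    have h1 : -(n : ℝ) * ε ^ 2 / 4 = -L := by linarith [hεsq]
    rw [hrdef, h1, hLdef, ← Real.log_inv, Real.exp_log (by positivity)]
    rw [inv_div]
  have hr0 : 0 ≤ r := Real.exp_nonneg _
  set B : EuclideanSpace ℝ (Fin d) × EuclideanSpace ℝ (Fin d) → Set Ω' :=
    fun p => {ω' | ε < |⟪g p.1 - (n : ℝ)⁻¹ • ∑ i : Fin n, f (X i ω') p.1, p.2⟫|} with hB
  have hpair : ∀ p ∈ Θ' ×ˢ Θ', P (B p) ≤ ENNReal.ofReal r + ENNReal.ofReal r := by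
    rintro ⟨θ, φ⟩ hp
    rw [Finset.mem_product] at hp
    obtain ⟨hθ', hφ'⟩ := hp
    have hθΘ : θ ∈ Θ := hsub hθ'
    have hφΘ : φ ∈ Θ := hsub hφ'
    set Z : Ω → ℝ := fun ω => ⟪f ω θ, φ⟫ with hZdef
    have hZm : Measurable Z := (hmeas θ hθΘ).inner measurable_const
    have hZb : ∀ ω, |Z ω| ≤ 1 := by
      intro ω
      calc |Z ω| ≤ ‖f ω θ‖ * ‖φ‖ := abs_real_inner_le_norm _ _
        _ ≤ 1 * 1 := mul_le_mul (hbdd ω θ hθΘ) (hΘball φ hφΘ) (norm_nonneg _)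
              (le_trans (norm_nonneg _) (hbdd ω θ hθΘ))
        _ = 1 := one_mul 1
    set m : ℝ := ∫ ω, Z ω ∂μ with hmdef
    have hmZ : m = ⟪g θ, φ⟫ := by
      rw [hmdef, hg θ hθΘ]
      have h : (fun ω => Z ω) = fun ω => ⟪φ, f ω θ⟫ :=
        funext fun ω => real_inner_comm _ _
      rw [h, integral_inner (hint θ hθΘ) φ]
      exact real_inner_comm _ _
    have hid : ∀ ω', ⟪g θ - (n : ℝ)⁻¹ • ∑ i : Fin n, f (X i ω') θ, φ⟫
        = -((n : ℝ)⁻¹ * ∑ i : Fin n, (Z (X i ω') - m)) := by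
      intro ω'
      have hsum : ∑ i : Fin n, (Z (X i ω') - m) = (∑ i : Fin n, Z (X i ω')) - n * m := by
        rw [Finset.sum_sub_distrib, Finset.sum_const, Finset.card_univ, Fintype.card_fin,
          nsmul_eq_mul]
      rw [hsum, inner_sub_left]
      simp only [real_inner_smul_left, sum_inner]
      rw [← hmZ]
      have h2 : ∑ i : Fin n, ⟪f (X i ω') θ, φ⟫ = ∑ i : Fin n, Z (X i ω') := rfl
      rw [h2]
      field_simp
      ring
    have hZnm : Measurable (-Z) := hZm.neg
    have hZnb : ∀ ω, |(-Z) ω| ≤ 1 := fun ω => by simpa using hZb ω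
    have hintneg : ∫ ω, (-Z) ω ∂μ = -m := by
      simp only [Pi.neg_apply]
      rw [integral_neg]
    have hincl : B (θ, φ) ⊆
        {ω' | (n : ℝ) * ε ≤ ∑ i : Fin n, (Z (X i ω') - ∫ ω, Z ω ∂μ)} ∪
        {ω' | (n : ℝ) * ε ≤ ∑ i : Fin n, ((-Z) (X i ω') - ∫ ω, (-Z) ω ∂μ)} := by
      intro ω' hω'
      simp only [hB, Set.mem_setOf_eq] at hω'
      rw [hid ω', abs_neg, abs_mul,
        abs_of_nonneg (by positivity : (0:ℝ) ≤ (n:ℝ)⁻¹)] at hω'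
      set S : ℝ := ∑ i : Fin n, (Z (X i ω') - m) with hSdef
      have hS : (n : ℝ) * ε < |S| := by
        rw [inv_mul_eq_div, lt_div_iff₀ hnpos] at hω'
        linarith
      have hnegsum : ∑ i : Fin n, ((-Z) (X i ω') - ∫ ω, (-Z) ω ∂μ) = -S := by
        rw [hintneg, hSdef, ← Finset.sum_neg_distrib]
        congr 1; funext i; simp; ring
      rcases le_or_gt 0 S with hpos | hneg
      · left
        rw [Set.mem_setOf_eq, ← hmdef, ← hSdef]
        rw [abs_of_nonneg hpos] at hS
        exact hS.le
      · right
        rw [Set.mem_setOf_eq, hnegsum]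
        rw [abs_of_neg hneg] at hS
        exact hS.le
    have ht1 := tail_one_side μ P X hX_meas hX_indep hX_law Z hZm hZb ε hε0
    have ht2 := tail_one_side μ P X hX_meas hX_indep hX_law (-Z) hZnm hZnb ε hε0
    calc P (B (θ, φ)) ≤
        P ({ω' | (n : ℝ) * ε ≤ ∑ i : Fin n, (Z (X i ω') - ∫ ω, Z ω ∂μ)} ∪
          {ω' | (n : ℝ) * ε ≤ ∑ i : Fin n, ((-Z) (X i ω') - ∫ ω, (-Z) ω ∂μ)}) :=
          measure_mono hincl
      _ ≤ P {ω' | (n : ℝ) * ε ≤ ∑ i : Fin n, (Z (X i ω') - ∫ ω, Z ω ∂μ)} +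
          P {ω' | (n : ℝ) * ε ≤ ∑ i : Fin n, ((-Z) (X i ω') - ∫ ω, (-Z) ω ∂μ)} :=
          measure_union_le _ _
      _ ≤ ENNReal.ofReal r + ENNReal.ofReal r := by
          gcongr
          · exact (ENNReal.le_ofReal_iff_toReal_le (measure_ne_top P _) hr0).mpr ht1
          · exact (ENNReal.le_ofReal_iff_toReal_le (measure_ne_top P _) hr0).mpr ht2
  set Bad : Set Ω' := ⋃ p ∈ Θ' ×ˢ Θ', B p with hBad
  have hBadle : P Bad ≤ ENNReal.ofReal δ := by
    calc P Bad ≤ ∑ p ∈ Θ' ×ˢ Θ', P (B p) := measure_biUnion_finset_le _ _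
      _ ≤ ∑ _p ∈ Θ' ×ˢ Θ', (ENNReal.ofReal r + ENNReal.ofReal r) :=
          Finset.sum_le_sum hpair
      _ = (Θ' ×ˢ Θ').card • (ENNReal.ofReal r + ENNReal.ofReal r) := by
          rw [Finset.sum_const]
      _ = ENNReal.ofReal δ := by
          rw [Finset.card_product]
          exact card_smul_aux Θ'.card r δ hK1 hδ0 (by rw [hr, hKdef])
  have hBmeas : ∀ p ∈ Θ' ×ˢ Θ', MeasurableSet (B p) := by
    rintro ⟨θ, φ⟩ hp
    rw [Finset.mem_product] at hp
    have hθΘ : θ ∈ Θ := hsub hp.1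
    have havgm : Measurable fun ω' => (n : ℝ)⁻¹ • ∑ i : Fin n, f (X i ω') θ :=
      (Finset.measurable_fun_sum Finset.univ
        (fun i _ => (hmeas θ hθΘ).comp (hX_meas i))).const_smul (n : ℝ)⁻¹
    have hval : Measurable fun ω' =>
        |⟪g θ - (n : ℝ)⁻¹ • ∑ i : Fin n, f (X i ω') θ, φ⟫| :=
      ((measurable_const.sub havgm).inner measurable_const).abs
    exact measurableSet_lt measurable_const hval
  have hBadmeas : MeasurableSet Bad := by
    rw [hBad]
    exact (Θ' ×ˢ Θ').measurableSet_biUnion hBmeas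
  have hcompl : ENNReal.ofReal (1 - δ) ≤ P Badᶜ := by
    rw [prob_compl_eq_one_sub hBadmeas]
    calc ENNReal.ofReal (1 - δ) = 1 - ENNReal.ofReal δ := by
          rw [ENNReal.ofReal_sub 1 hδ0.le, ENNReal.ofReal_one]
      _ ≤ 1 - P Bad := tsub_le_tsub_left hBadle 1
  refine le_trans hcompl (measure_mono ?_)
  intro ω' hω'
  have hnot : ∀ p ∈ Θ' ×ˢ Θ', ω' ∉ B p := fun p hp hmem =>
    hω' (Set.mem_biUnion hp hmem)
  rw [Set.mem_setOf_eq]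
  intro θ hθ' θ' hθ'Θ
  have hθΘ : θ ∈ Θ := hsub hθ'
  obtain ⟨φ, hφ', hφnet⟩ := hnet θ' hθ'Θ
  have hφΘ : φ ∈ Θ := hsub hφ'
  set A : EuclideanSpace ℝ (Fin d) := (n : ℝ)⁻¹ • ∑ i : Fin n, f (X i ω') θ with hA
  have hle1 : |⟪g θ - A, φ⟫| ≤ ε := by
    have h := hnot (θ, φ) (Finset.mem_product.mpr ⟨hθ', hφ'⟩)
    simp only [hB, Set.mem_setOf_eq, not_lt, ← hA] at h
    exact h
  have hgb : ‖g θ‖ ≤ 1 := by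
    rw [hg θ hθΘ]
    calc ‖∫ ω, f ω θ ∂μ‖ ≤ ∫ ω, ‖f ω θ‖ ∂μ := norm_integral_le_integral_norm _
      _ ≤ ∫ _ω, (1:ℝ) ∂μ := integral_mono (hint θ hθΘ).norm (integrable_const 1)
          (fun ω => hbdd ω θ hθΘ)
      _ = 1 := by simp
  have hsumb : ‖∑ i : Fin n, f (X i ω') θ‖ ≤ (n : ℝ) := by
    calc ‖∑ i : Fin n, f (X i ω') θ‖ ≤ ∑ i : Fin n, ‖f (X i ω') θ‖ := norm_sum_le _ _
      _ ≤ ∑ _i : Fin n, (1:ℝ) := Finset.sum_le_sum fun i _ => hbdd (X i ω') θ hθΘ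
      _ = (n : ℝ) := by
          rw [Finset.sum_const, Finset.card_univ, Fintype.card_fin, nsmul_eq_mul, mul_one]
  have havgb : ‖A‖ ≤ 1 := by
    rw [hA, norm_smul, Real.norm_eq_abs, abs_of_nonneg (by positivity : (0:ℝ) ≤ (n:ℝ)⁻¹)]
    calc (n : ℝ)⁻¹ * ‖∑ i : Fin n, f (X i ω') θ‖ ≤ (n : ℝ)⁻¹ * (n : ℝ) := by
          gcongr
      _ = 1 := inv_mul_cancel₀ hnpos.ne'
  have hΔb : ‖g θ - A‖ ≤ 2 := by
    calc ‖g θ - A‖ ≤ ‖g θ‖ + ‖A‖ := norm_sub_le _ _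
      _ ≤ 2 := by linarith
  have h3 : |⟪g θ - A, θ' - φ⟫| ≤ ‖g θ - A‖ * ‖θ' - φ‖ := abs_real_inner_le_norm _ _
  have h4 : ‖g θ - A‖ * ‖θ' - φ‖ ≤ 2 * (1 / T) :=
    mul_le_mul hΔb hφnet (norm_nonneg _) (by norm_num)
  have h5 : ⟪g θ - A, θ'⟫ = ⟪g θ - A, φ⟫ + ⟪g θ - A, θ' - φ⟫ := by
    rw [inner_sub_right]
    ring
  have h6 : |⟪g θ - A, θ'⟫| ≤ |⟪g θ - A, φ⟫| + |⟪g θ - A, θ' - φ⟫| := by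
    rw [h5]
    exact abs_add_le _ _
  have h7 : 2 * (1 / T) = 2 / T := by ring
  linarith
end

section
/- (Inner-product identity of Theorem 3.) Define μ_i = ∫_Ω M_i(ω) dμ(ω) and ν_i = ∫_Ω m_i(ω) dμ(ω) for i ∈ {1, …, d}. For θ ∈ Θ define a'(θ) ∈ {0,1}^{2d} by a'(θ)_{2i−1} = 1 if θ_i ≥ 0 and 0 otherwise, and a'(θ)_{2i} = 1 − a'(θ)_{2i−1}; and for θ⋆ ∈ ℝ^d define θ'⋆ ∈ ℝ^{2d} by θ'⋆_{2i−1} = μ_i · (θ⋆)_i and θ'⋆_{2i} = ν_i · (θ⋆)_i. Then for every θ ∈ Θ all of whose coordinates are nonzero and every θ⋆ ∈ ℝ^d: ⟨g(θ), θ⋆⟩ = ⟨a'(θ), θ'⋆⟩. In particular, a'(θ) lies in the fixed action set 𝒳 = {a' ∈ {0,1}^{2d} : a'_{2i−1} + a'_{2i} = 1 for all i}, which does not depend on the context distribution. -/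
open MeasureTheory
open scoped RealInnerProductSpace

private lemma euclidean_sum_apply {d : ℕ} (v : Fin d → EuclideanSpace ℝ (Fin d))
    (j : Fin d) : (∑ x, v x) j = ∑ x, v x j :=
  by rw [WithLp.ofLp_sum]; exact Finset.sum_apply j Finset.univ _

/-- inner-product identity of Theorem 3: with μ_i = ∫ M_i dμ, ν_i = ∫ m_i dμ,
a'(θ) ∈ {0,1}^{2d} encoding the signs of θ (coordinates indexed by Fin d × Fin 2, where
(i,0) plays the role of 2i−1 and (i,1) the role of 2i), and θ'⋆ the lifted parameter,
one has ⟨g(θ), θ⋆⟩ = ⟨a'(θ), θ'⋆⟩ whenever all coordinates of θ are nonzero; moreover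
a'(θ) lies in the fixed action set {a' ∈ {0,1}^{2d} : a'_{2i−1} + a'_{2i} = 1 ∀ i}. -/
theorem product_context_lift_inner_identity
    (d : ℕ) (Θ : Set (EuclideanSpace ℝ (Fin d)))
    {Ω : Type*} [MeasurableSpace Ω] (μ : Measure Ω) [IsProbabilityMeasure μ]
    (A : Ω → Fin d → Set ℝ)
    (hne : ∀ ω i, (A ω i).Nonempty) (hcomp : ∀ ω i, IsCompact (A ω i))
    (M m : Ω → Fin d → ℝ)
    (hM : ∀ ω i, IsGreatest (A ω i) (M ω i))
    (hm : ∀ ω i, IsLeast (A ω i) (m ω i))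
    (hM_int : ∀ i, Integrable (fun ω => M ω i) μ)
    (hm_int : ∀ i, Integrable (fun ω => m ω i) μ)
    (f : Ω → EuclideanSpace ℝ (Fin d) → EuclideanSpace ℝ (Fin d))
    (hf : ∀ ω θ i, f ω θ i = if 0 ≤ θ i then M ω i else m ω i)
    (g : EuclideanSpace ℝ (Fin d) → EuclideanSpace ℝ (Fin d))
    (hg : ∀ θ, g θ = ∫ ω, f ω θ ∂μ)
    (μi νi : Fin d → ℝ)
    (hμi : ∀ i, μi i = ∫ ω, M ω i ∂μ)
    (hνi : ∀ i, νi i = ∫ ω, m ω i ∂μ)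
    (a' : EuclideanSpace ℝ (Fin d) → EuclideanSpace ℝ (Fin d × Fin 2))
    (ha' : ∀ θ i, a' θ (i, 0) = (if 0 ≤ θ i then (1 : ℝ) else 0) ∧
      a' θ (i, 1) = 1 - a' θ (i, 0))
    (θstar : EuclideanSpace ℝ (Fin d))
    (θstar' : EuclideanSpace ℝ (Fin d × Fin 2))
    (hθstar' : ∀ i, θstar' (i, 0) = μi i * θstar i ∧ θstar' (i, 1) = νi i * θstar i) :
    ∀ θ ∈ Θ, (∀ i, θ i ≠ 0) →
      (⟪g θ, θstar⟫ = ⟪a' θ, θstar'⟫ ∧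
       (∀ i, a' θ (i, 0) + a' θ (i, 1) = 1) ∧
       (∀ p : Fin d × Fin 2, a' θ p = 0 ∨ a' θ p = 1)) := by
  intro θ hθ hθne
  have key : g θ = fun i => if 0 ≤ θ i then μi i else νi i := by
    have hfe : ∀ ω, f ω θ = ∑ i, (if 0 ≤ θ i then M ω i else m ω i) •
        (EuclideanSpace.single i (1:ℝ)) := by
      intro ω
      ext j
      rw [hf]
      simp only [euclidean_sum_apply, apply_ite (fun v : EuclideanSpace ℝ (Fin d) => v j),
        PiLp.smul_apply, EuclideanSpace.single_apply, smul_eq_mul, mul_ite, mul_one, mul_zero]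
      rw [Finset.sum_ite_eq]
      simp
    rw [hg]
    have : (∫ ω, f ω θ ∂μ) = ∑ i, (∫ ω, (if 0 ≤ θ i then M ω i else m ω i) ∂μ) •
        (EuclideanSpace.single i (1:ℝ)) := by
      simp_rw [hfe]
      rw [integral_finset_sum]
      · congr 1; ext i; rw [integral_smul_const]
      · intro i _
        by_cases h : 0 ≤ θ i <;> simp only [h, if_true, if_false]
        · exact (hM_int i).smul_const _
        · exact (hm_int i).smul_const _
    rw [this]
    ext j
    have : ∀ i, (∫ ω, (if 0 ≤ θ i then M ω i else m ω i) ∂μ) =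
        (if 0 ≤ θ i then μi i else νi i) := by
      intro i
      by_cases h : 0 ≤ θ i <;> simp [h, hμi, hνi]
    simp_rw [this]
    simp only [euclidean_sum_apply, apply_ite (fun v : EuclideanSpace ℝ (Fin d) => v j),
        PiLp.smul_apply, EuclideanSpace.single_apply, smul_eq_mul, mul_ite, mul_one, mul_zero]
    rw [Finset.sum_ite_eq]
    simp
  refine ⟨?_, ?_, ?_⟩
  · rw [PiLp.inner_apply, key]
    simp only [PiLp.inner_apply, RCLike.inner_apply, conj_trivial]
    rw [Fintype.sum_prod_type]
    refine Finset.sum_congr rfl fun i _ => ?_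
    rw [Fin.sum_univ_two]
    rcases ha' θ i with ⟨h0, h1⟩
    rcases hθstar' i with ⟨hs0, hs1⟩
    by_cases h : 0 ≤ θ i <;> simp [h, h0, h1, hs0, hs1, mul_comm]
  · intro i
    rcases ha' θ i with ⟨h0, h1⟩
    rw [h1]; ring
  · rintro ⟨i, j⟩
    rcases ha' θ i with ⟨h0, h1⟩
    fin_cases j
    · by_cases h : 0 ≤ θ i <;> simp [h0, h]
    · by_cases h : 0 ≤ θ i <;> simp [h1, h0, h]
end
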